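/- For every z in the open first quadrant with |z| > 1, 1 + (1+i)·F(z) = (2(1+i)/π)·Σ_{n=0}^∞ 1/((4n+1)·z^(4n+1)), where F(z) := (1/(2π))·(Log((1+z)/(1−z)) + i·Log((1+iz)/(1−iz))). -/

import Mathlib

open Complex

lemma negI_pow_four : (-Complex.I)^4 = 1 := by
  rw [Even.neg_pow (by decide : Even 4)]
  norm_num [pow_succ, Complex.I_mul_I]

lemma negI_pow_4k3 (k:ℕ) : (-Complex.I)^(4*k+3) = Complex.I := by
  rw [pow_add, pow_mul, negI_pow_four, one_pow, one_mul, Odd.neg_pow ⟨1, by norm_num⟩,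
    pow_succ, pow_two, Complex.I_mul_I]
  ring

lemma negI_pow_4m1 (m:ℕ) : (-Complex.I)^(4*m+1) = -Complex.I := by
  rw [pow_add, pow_mul, negI_pow_four, one_pow, one_mul, pow_one]

lemma log_aux (v : ℂ) (h1re : 0 < (1+v).re) (h1im : (1+v).im < 0)
    (h2re : 0 < (1-v).re) (h2im : 0 < (1-v).im) :
    Complex.log (-((1+v)/(1-v))) = Complex.log (1+v) - Complex.log (1-v) + Real.pi * I := by
  have hne1 : (1+v) ≠ 0 := fun h => by simp [h] at h1re
  have hne2 : (1-v) ≠ 0 := fun h => by simp [h] at h2re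
  have hexp : Complex.exp (Complex.log (1+v) - Complex.log (1-v) + Real.pi * I)
      = -((1+v)/(1-v)) := by
    rw [Complex.exp_add, Complex.exp_sub, Complex.exp_log hne1, Complex.exp_log hne2,
      Complex.exp_pi_mul_I]
    ring
  have hpi := Real.pi_pos
  have ha1 : -(Real.pi/2) < (1+v).arg := neg_pi_div_two_lt_arg_iff.mpr (Or.inl h1re)
  have ha2 : (1+v).arg < 0 := arg_neg_iff.mpr h1im
  have hb1 : 0 ≤ (1-v).arg := arg_nonneg_iff.mpr h2im.le
  have hb2 : (1-v).arg < Real.pi/2 := arg_lt_pi_div_two_iff.mpr (Or.inl h2re)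
  have him : (Complex.log (1+v) - Complex.log (1-v) + Real.pi * I).im
      = (1+v).arg - (1-v).arg + Real.pi := by
    simp [Complex.log_im]
  rw [← hexp, Complex.log_exp (by rw [him]; linarith) (by rw [him]; linarith)]

/-- `F(z) = (1/(2π))·(Log((1+z)/(1−z)) + i·Log((1+iz)/(1−iz)))`. -/
noncomputable def F (z : ℂ) : ℂ :=
  (1 / (2 * (Real.pi : ℂ))) *
    (Complex.log ((1 + z) / (1 - z)) + Complex.I * Complex.log ((1 + Complex.I * z) / (1 - Complex.I * z)))

/-- For `z` in the open first quadrant with `|z| > 1`,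
`1 + (1+i)·F(z) = (2(1+i)/π)·Σ_{n=0}^∞ 1/((4n+1)·z^(4n+1))`. -/
theorem one_add_mul_F_hasSum (z : ℂ)
    (hre : 0 < z.re) (him : 0 < z.im) (hz : 1 < ‖z‖) :
    HasSum
      (fun n : ℕ => (2 * (1 + Complex.I) / (Real.pi : ℂ)) *
        (1 / (((4 * n + 1 : ℕ) : ℂ) * z ^ (4 * n + 1))))
      (1 + (1 + Complex.I) * F z) := by
  have hπ : (Real.pi : ℂ) ≠ 0 := by exact_mod_cast Real.pi_ne_zero
  have hzne : z ≠ 0 := by intro h; rw [h] at hz; simp at hz; linarith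
  set w : ℂ := z⁻¹ with hwdef
  have hwne : w ≠ 0 := inv_ne_zero hzne
  have hw : ‖w‖ < 1 := by
    rw [hwdef, norm_inv, inv_lt_one_iff₀]
    right; exact hz
  have hwre : 0 < w.re := by
    rw [hwdef, Complex.inv_re]
    exact div_pos hre (Complex.normSq_pos.mpr hzne)
  have hwim : w.im < 0 := by
    rw [hwdef, Complex.inv_im]
    exact div_neg_of_neg_of_pos (neg_neg_iff_pos.mpr him) (Complex.normSq_pos.mpr hzne)
  have hwre1 : w.re < 1 := by
    have h := (Complex.abs_re_le_norm w).trans_lt hw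
    have := abs_lt.mp h; linarith [this.1]
  have hwim1 : -1 < w.im := by
    have h := (Complex.abs_im_le_norm w).trans_lt hw
    have := abs_lt.mp h; linarith [this.1]
  set u : ℂ := -Complex.I * w with hudef
  have hu : ‖u‖ < 1 := by rw [hudef]; simpa using hw
  have hure : u.re = w.im := by simp [hudef]
  have huim : u.im = -w.re := by simp [hudef]
  -- series
  have h1 := Complex.hasSum_taylorSeries_neg_log hw
  have h2 := Complex.hasSum_taylorSeries_neg_log (z := -w) (by simpa using hw)
  have h3 := Complex.hasSum_taylorSeries_neg_log hu
  have h4 := Complex.hasSum_taylorSeries_neg_log (z := -u) (by simpa using hu)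
  rw [sub_neg_eq_add] at h2 h4
  set c : ℂ := (1 + Complex.I) / (2 * Real.pi) with hcdef
  set A : ℂ := Complex.log (1+w) - Complex.log (1-w) with hA
  set B : ℂ := Complex.log (1+u) - Complex.log (1-u) with hB
  have htot : HasSum
      (fun n : ℕ => c * ((w^n/n - (-w)^n/n) + Complex.I*(u^n/n - (-u)^n/n)))
      (c * (A + Complex.I * B)) := by
    have := ((h1.sub h2).add ((h3.sub h4).mul_left Complex.I)).mul_left c
    rw [show c * (A + Complex.I * B) = c * (-log (1 - w) - -log (1 + w) + I * (-log (1 - u) - -log (1 + u))) by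
      rw [hA, hB]; ring]
    exact this
  -- reindex
  have hinj : Function.Injective (fun m : ℕ => 4*m+1) := by
    intro a b h; dsimp only at h; omega
  have hzero : ∀ n ∉ Set.range (fun m : ℕ => 4*m+1),
      c * ((w^n/n - (-w)^n/n) + Complex.I*(u^n/n - (-u)^n/n)) = 0 := by
    intro n hn
    have h4' : n % 4 ≠ 1 := by
      intro h; exact hn ⟨n/4, by dsimp only; omega⟩
    rcases Nat.even_or_odd n with he | ho
    · rw [he.neg_pow, he.neg_pow]; ring
    · have h3' : n % 4 = 3 := by obtain ⟨k, hk⟩ := ho; omega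
      obtain ⟨k, rfl⟩ : ∃ k, n = 4*k+3 := ⟨n/4, by omega⟩
      have e1 : u^(4*k+3) = Complex.I * w^(4*k+3) := by
        rw [hudef, mul_pow, negI_pow_4k3]
      calc c * ((w^(4*k+3)/((4*k+3:ℕ):ℂ) - (-w)^(4*k+3)/((4*k+3:ℕ):ℂ))
            + Complex.I*(u^(4*k+3)/((4*k+3:ℕ):ℂ) - (-u)^(4*k+3)/((4*k+3:ℕ):ℂ)))
          = c * ((1 + Complex.I*Complex.I) * (2*w^(4*k+3)/((4*k+3:ℕ):ℂ))) := by
            rw [ho.neg_pow, ho.neg_pow, e1]; ring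
        _ = 0 := by rw [Complex.I_mul_I]; ring
  rw [← Function.Injective.hasSum_iff hinj hzero] at htot
  -- identify summands
  have hterm : ((fun n : ℕ => c * ((w^n/n - (-w)^n/n) + Complex.I*(u^n/n - (-u)^n/n)))
        ∘ (fun m : ℕ => 4*m+1))
      = (fun n : ℕ => (2 * (1 + Complex.I) / (Real.pi : ℂ)) *
        (1 / (((4 * n + 1 : ℕ) : ℂ) * z ^ (4 * n + 1)))) := by
    funext m
    simp only [Function.comp_apply]
    have hodd : Odd (4*m+1) := ⟨2*m, by ring⟩
    have e1 : u^(4*m+1) = -Complex.I * w^(4*m+1) := by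
      rw [hudef, mul_pow, negI_pow_4m1]
    have hnne : ((4*m+1 : ℕ) : ℂ) ≠ 0 := Nat.cast_ne_zero.mpr (by omega)
    have hzp : z ^ (4*m+1) ≠ 0 := pow_ne_zero _ hzne
    rw [hodd.neg_pow, hodd.neg_pow, e1, hcdef, hwdef, inv_pow]
    set Y : ℂ := z ^ (4*m+1) with hY
    set CN : ℂ := ((4*m+1 : ℕ) : ℂ) with hCN
    have h2 : Complex.I * (-Complex.I * Y⁻¹ / CN - - (-Complex.I * Y⁻¹) / CN)
        = - (Complex.I * Complex.I) * (2 * Y⁻¹ / CN) := by ring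
    rw [h2, Complex.I_mul_I]
    field_simp
    ring
  rw [hterm] at htot
  -- identify the value
  have h1zne : (1:ℂ) - z ≠ 0 := by
    intro h
    have : z = 1 := by linear_combination -h
    rw [this] at hz; simp at hz
  have hIzne : (1:ℂ) - Complex.I*z ≠ 0 := by
    intro h
    have : Complex.I * z = 1 := by linear_combination -h
    have := congrArg norm this
    simp at this
    rw [this] at hz; simp at hz
  have h1wne : (1:ℂ) - w ≠ 0 := fun h => by
    have := congrArg Complex.re h; simp at this; linarith
  have h1une : (1:ℂ) - u ≠ 0 := fun h => by
    have := congrArg Complex.re h; simp [hure] at this; linarith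
  have hA' : Complex.log ((1+z)/(1-z)) = A + Real.pi * I := by
    have heq : (1+z)/(1-z) = -((1+w)/(1-w)) := by
      rw [hwdef, ← neg_div, div_eq_div_iff h1zne (hwdef ▸ h1wne)]
      field_simp
      ring
    rw [heq, hA, log_aux w (by simp; linarith) (by simpa using hwim)
      (by simp; linarith) (by simpa using hwim)]
  have hB' : Complex.log ((1+Complex.I*z)/(1-Complex.I*z)) = B + Real.pi * I := by
    have heq : (1+Complex.I*z)/(1-Complex.I*z) = -((1+u)/(1-u)) := by
      have hIz : Complex.I + z ≠ 0 := by
        intro h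
        have : z = -Complex.I := by linear_combination h
        rw [this] at hz; simp at hz
      rw [hudef, hwdef, ← neg_div, div_eq_div_iff hIzne (by rw [← hwdef, ← hudef]; exact h1une)]
      field_simp
      linear_combination (2*z^2*Complex.I + 2*z - 2*Complex.I*z^2) * Complex.I_sq
    rw [heq, hB, log_aux u (by simp [hure]; linarith) (by simp [huim]; linarith)
      (by simp [hure]; linarith) (by simp [huim]; linarith)]
  have hval : 1 + (1 + Complex.I) * F z = c * (A + Complex.I * B) := by
    rw [F, hA', hB', hcdef]
    field_simp
    ring_nf
    linear_combination ((Real.pi:ℂ)*Complex.I + 2*Real.pi) * Complex.I_sq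
  rw [hval]
  exact htot
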